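/- Let 0 < q < 1 and α, β, γ, δ ≥ 0, set θ = 1/√(1−q) and Δ(x) = 1/θ + θ·x. Let m ≥ 0 and n ≥ 1 be integers and put K = m + n. Suppose φ : {(i,j) ∈ ℕ×ℕ : i + j ≤ K} → ℝ satisfies the invariance equations (W) and (V) at every (i,j) with i + j ≤ K − 1. Then the consistency identity holds: (β·Δ(γ−α) + γ·Δ(δ−β)·q^m)·φ(m,n) + γδ·[n]_q·q^m·φ(m,n−1) + βγ·[m]_q·φ(m−1,n) = (α·Δ(δ−β) + δ·Δ(γ−α)·q^{n−1})·φ(m+1,n−1) + αδ·[n−1]_q·φ(m+1,n−2) + γδ·q^{n−1}·[m+1]_q·φ(m,n−1), where terms with a negative index are omitted (their coefficients [0]_q vanish). -/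
import Mathlib


noncomputable section

open scoped BigOperators

/-- `θ = 1/√(1-q)`. -/
def theta (q : ℝ) : ℝ := 1 / Real.sqrt (1 - q)

/-- `Δ(x) = θ⁻¹ + θ·x`. -/
def Delta (q x : ℝ) : ℝ := (theta q)⁻¹ + theta q * x

/-- The q-integer `[k]_q = 1 + q + ⋯ + q^{k-1}` (with `[0]_q = 0`). -/
def qInt (q : ℝ) (k : ℕ) : ℝ := ∑ i ∈ Finset.range k, q ^ i

/-- Invariance equation (W) at `(m,n)`; the term involving index `m-1` is written with
truncated subtraction, its coefficient `[0]_q = 0` vanishing when `m = 0`. -/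
def Weq (q α γ : ℝ) (φ : ℕ → ℕ → ℝ) (m n : ℕ) : Prop :=
  α * φ (m + 1) n - q ^ m * γ * φ m (n + 1) =
    Delta q (γ - α) * φ m n + γ * qInt q m * φ (m - 1) n

/-- Invariance equation (V) at `(m,n)`; the term involving index `n-1` is written with
truncated subtraction, its coefficient `[0]_q = 0` vanishing when `n = 0`. -/
def Veq (q β δ : ℝ) (φ : ℕ → ℕ → ℝ) (m n : ℕ) : Prop :=
  -(q ^ n * δ) * φ (m + 1) n + β * φ m (n + 1) =
    Delta q (δ - β) * φ m n + δ * qInt q n * φ m (n - 1)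

lemma qInt_zero (q : ℝ) : qInt q 0 = 0 := Finset.sum_range_zero _
lemma qInt_succ (q : ℝ) (k : ℕ) : qInt q (k + 1) = qInt q k + q ^ k :=
  Finset.sum_range_succ _ _

theorem stmt12 (q α β γ δ : ℝ) (hq0 : 0 < q) (hq1 : q < 1)
    (hα : 0 ≤ α) (hβ : 0 ≤ β) (hγ : 0 ≤ γ) (hδ : 0 ≤ δ)
    (m n : ℕ) (hn : 1 ≤ n) (φ : ℕ → ℕ → ℝ)
    (hW : ∀ i j : ℕ, i + j ≤ m + n - 1 → Weq q α γ φ i j)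
    (hV : ∀ i j : ℕ, i + j ≤ m + n - 1 → Veq q β δ φ i j) :
    (β * Delta q (γ - α) + γ * Delta q (δ - β) * q ^ m) * φ m n
        + γ * δ * qInt q n * q ^ m * φ m (n - 1)
        + β * γ * qInt q m * φ (m - 1) n =
      (α * Delta q (δ - β) + δ * Delta q (γ - α) * q ^ (n - 1)) * φ (m + 1) (n - 1)
        + α * δ * qInt q (n - 1) * φ (m + 1) (n - 2)
        + γ * δ * q ^ (n - 1) * qInt q (m + 1) * φ m (n - 1) := by
  cases n with
  | zero => omega
  | succ n' =>
  have hb : m + (n' + 1) - 1 = m + n' := by omega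
  rw [hb] at hW hV
  cases m with
  | zero =>
    cases n' with
    | zero =>
      have h1 := hW 0 0 (by omega)
      have h2 := hV 0 0 (by omega)
      simp only [Weq, Veq] at h1 h2 ⊢
      norm_num [qInt_zero, qInt_succ] at h1 h2 ⊢
      linear_combination (-(Delta q (δ - β))) * h1 + Delta q (γ - α) * h2
    | succ j =>
      have h1 := hW 0 (j + 1) (by omega)
      have h2 := hV 0 (j + 1) (by omega)
      have h4 := hW 0 j (by omega)
      have hj2 : j + 1 + 1 - 2 = j := by omega
      simp only [Weq, Veq, hj2] at h1 h2 h4 ⊢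
      norm_num [qInt_zero, qInt_succ] at h1 h2 h4 ⊢
      linear_combination (-(Delta q (δ - β))) * h1 + Delta q (γ - α) * h2 -
        δ * (qInt q j + q ^ j) * h4
  | succ k =>
    cases n' with
    | zero =>
      have h1 := hW (k + 1) 0 (by omega)
      have h2 := hV (k + 1) 0 (by omega)
      have h3 := hV k 0 (by omega)
      simp only [Weq, Veq] at h1 h2 h3 ⊢
      norm_num [qInt_zero, qInt_succ] at h1 h2 h3 ⊢
      linear_combination (-(Delta q (δ - β))) * h1 + Delta q (γ - α) * h2 +
        γ * (qInt q k + q ^ k) * h3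
    | succ j =>
      have h1 := hW (k + 1) (j + 1) (by omega)
      have h2 := hV (k + 1) (j + 1) (by omega)
      have h3 := hV k (j + 1) (by omega)
      have h4 := hW (k + 1) j (by omega)
      have hj2 : j + 1 + 1 - 2 = j := by omega
      simp only [Weq, Veq, hj2] at h1 h2 h3 h4 ⊢
      norm_num [qInt_zero, qInt_succ] at h1 h2 h3 h4 ⊢
      linear_combination (-(Delta q (δ - β))) * h1 + Delta q (γ - α) * h2 +
        γ * (qInt q k + q ^ k) * h3 - δ * (qInt q j + q ^ j) * h4

end
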